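/- arXiv:2206.08238 — 3 statements merged into one kernel-verified Lean document; each statement's English description precedes it below -/
import Mathlib

section
/- Let n ≥ 2, let M ⊆ ℝⁿ be an open set containing 0, and let N = {(t,0,…,0) ∈ M : t ∈ ℝ}. Let α be a smooth 1-form on M (a smooth map M → (ℝⁿ)*) whose exterior derivative dα, defined by dα_x(u,v) = (D_xα·u)(v) − (D_xα·v)(u), vanishes at every point of N. Then there exist an open neighborhood M′ ⊆ M of 0 and a smooth 1-form β on M′ such that dβ = dα on M′ and β vanishes to second order along N, i.e. β(p) = 0 and Dβ(p) = 0 for every p ∈ N ∩ M′. -/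
noncomputable section

private theorem auxHasFDerivAt {E F : Type*} [NormedAddCommGroup E] [NormedSpace ℝ E]
    [NormedAddCommGroup F] [NormedSpace ℝ F] {f : E → F} {s : Set E}
    (hf : ContDiffOn ℝ (⊤ : ℕ∞) f s) (hs : IsOpen s) {y : E} (hy : y ∈ s) :
    HasFDerivAt f (fderiv ℝ f y) y := by
  have h1 : DifferentiableOn ℝ f s := hf.differentiableOn (by simp)
  exact ((h1 y hy).differentiableAt (hs.mem_nhds hy)).hasFDerivAt

private theorem auxFderiv {E F : Type*} [NormedAddCommGroup E] [NormedSpace ℝ E]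
    [NormedAddCommGroup F] [NormedSpace ℝ F] {f : E → F} {s : Set E}
    (hf : ContDiffOn ℝ (⊤ : ℕ∞) f s) (hs : IsOpen s) :
    ContDiffOn ℝ (⊤ : ℕ∞) (fderiv ℝ f) s :=
  hf.fderiv_of_isOpen hs (le_of_eq rfl)

set_option maxHeartbeats 1000000 in
set_option synthInstance.maxHeartbeats 400000 in
/-- If a smooth 1-form `α` on an open set `M ⊆ ℝⁿ` containing `0`
has exterior derivative vanishing along the first coordinate axis
`N = {(t,0,…,0)} ∩ M`, then on some neighborhood `M′` of `0` there is a smooth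
1-form `β` with `dβ = dα` on `M′`, vanishing to second order along `N`. -/
theorem oneForm_primitive_vanishing_on_axis
    (n : ℕ) (hn : 2 ≤ n) (M : Set (Fin n → ℝ)) (hM : IsOpen M)
    (h0 : (0 : Fin n → ℝ) ∈ M)
    (α : (Fin n → ℝ) → (Fin n → ℝ) →L[ℝ] ℝ)
    (hα : ContDiffOn ℝ (⊤ : ℕ∞) α M)
    (hdα : ∀ p ∈ M, (∀ i : Fin n, (i : ℕ) ≠ 0 → p i = 0) →
      ∀ u v : Fin n → ℝ, fderiv ℝ α p u v = fderiv ℝ α p v u) :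
    ∃ M' : Set (Fin n → ℝ), M' ⊆ M ∧ IsOpen M' ∧ (0 : Fin n → ℝ) ∈ M' ∧
      ∃ β : (Fin n → ℝ) → (Fin n → ℝ) →L[ℝ] ℝ,
        ContDiffOn ℝ (⊤ : ℕ∞) β M' ∧
        (∀ p ∈ M', ∀ u v : Fin n → ℝ,
          fderiv ℝ β p u v - fderiv ℝ β p v u =
            fderiv ℝ α p u v - fderiv ℝ α p v u) ∧
        (∀ p ∈ M', (∀ i : Fin n, (i : ℕ) ≠ 0 → p i = 0) →
          β p = 0 ∧ fderiv ℝ β p = 0) := by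

  haveI : NeZero n := ⟨by omega⟩
  obtain ⟨r, hr, hball⟩ := Metric.isOpen_iff.1 hM 0 h0
  set e₀ : Fin n → ℝ := Pi.single (0 : Fin n) (1 : ℝ) with he₀
  set pr : (Fin n → ℝ) →L[ℝ] ℝ := ContinuousLinearMap.proj (0 : Fin n) with hpr
  set P : (Fin n → ℝ) →L[ℝ] (Fin n → ℝ) := pr.smulRight e₀ with hPdef
  set Q : (Fin n → ℝ) →L[ℝ] (Fin n → ℝ) := ContinuousLinearMap.id ℝ _ - P with hQdef
  set U : Set (Fin n → ℝ) := Metric.ball 0 r with hU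
  have hPapp : ∀ w : Fin n → ℝ, P w = w 0 • e₀ := fun w => by
    rw [hPdef]; simp [hpr]
  have hQapp : ∀ w : Fin n → ℝ, Q w = w - P w := fun w => by
    rw [hQdef]; simp
  have hPQ : ∀ w : Fin n → ℝ, P w + Q w = w := fun w => by
    rw [hQapp]; abel
  have hUopen : IsOpen U := Metric.isOpen_ball
  have h0U : (0 : Fin n → ℝ) ∈ U := Metric.mem_ball_self hr
  have hPU : ∀ {x : Fin n → ℝ}, x ∈ U → P x ∈ U := by
    intro x hx
    rw [hU, Metric.mem_ball, dist_zero_right] at hx ⊢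
    have h1 : ‖P x‖ ≤ ‖x‖ := by
      rw [hPapp, norm_smul]
      have he : ‖e₀‖ ≤ 1 := by
        rw [he₀]
        apply pi_norm_le_iff_of_nonneg zero_le_one |>.2
        intro i
        rcases eq_or_ne i 0 with h | h
        · subst h; simp
        · simp [h]
      calc ‖x 0‖ * ‖e₀‖ ≤ ‖x‖ * 1 :=
            mul_le_mul (norm_le_pi_norm x 0) he (norm_nonneg _) (norm_nonneg _)
        _ = ‖x‖ := mul_one _
    exact lt_of_le_of_lt h1 hx
  have hPM : ∀ {x : Fin n → ℝ}, x ∈ U → P x ∈ M := fun hx => hball (hPU hx)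
  -- derivatives of α
  set g2 := fderiv ℝ α with hg2def
  set g3 := fderiv ℝ g2 with hg3def
  letI : NormedAddCommGroup ((Fin n → ℝ) →L[ℝ] (Fin n → ℝ) →L[ℝ] ℝ) := inferInstance
  letI : NormedSpace ℝ ((Fin n → ℝ) →L[ℝ] (Fin n → ℝ) →L[ℝ] ℝ) := inferInstance
  set g4 := fderiv ℝ g3 with hg4def
  have hg2sm : ContDiffOn ℝ (⊤ : ℕ∞) g2 M := auxFderiv hα hM
  have hg3sm : ContDiffOn ℝ (⊤ : ℕ∞) g3 M := auxFderiv hg2sm hM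
  have hαd : ∀ {y : Fin n → ℝ}, y ∈ M → HasFDerivAt α (g2 y) y := fun hy =>
    auxHasFDerivAt hα hM hy
  have hg2d : ∀ {y : Fin n → ℝ}, y ∈ M → HasFDerivAt g2 (g3 y) y := fun hy =>
    auxHasFDerivAt hg2sm hM hy
  have hg3d : ∀ {y : Fin n → ℝ}, y ∈ M → HasFDerivAt g3 (g4 y) y := fun hy =>
    auxHasFDerivAt hg3sm hM hy
  -- the correction 1-form μ and potential G
  set μ : (Fin n → ℝ) → (Fin n → ℝ) →L[ℝ] ℝ := fun x => (α (P x) e₀) • pr with hμdef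
  set G : (Fin n → ℝ) → ℝ :=
    fun x => α (P x) (Q x) + (1/2 : ℝ) • (g2 (P x) (Q x) (Q x)) with hGdef
  set DG : (Fin n → ℝ) → (Fin n → ℝ) →L[ℝ] ℝ := fun x =>
    ((α (P x)).comp Q + ((g2 (P x)).comp P).flip (Q x)) +
      (1/2 : ℝ) • ((g2 (P x) (Q x)).comp Q +
        ((g2 (P x)).comp Q + ((g3 (P x)).comp P).flip (Q x)).flip (Q x)) with hDGdef
  -- basic HasFDerivAt facts for compositions with P
  have hAx : ∀ {x : Fin n → ℝ}, x ∈ U →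
      HasFDerivAt (fun y => α (P y)) ((g2 (P x)).comp P) x := fun {x} hx =>
    (hαd (hPM hx)).comp x P.hasFDerivAt
  have hBx : ∀ {x : Fin n → ℝ}, x ∈ U →
      HasFDerivAt (fun y => g2 (P y)) ((g3 (P x)).comp P) x := fun {x} hx =>
    (hg2d (hPM hx)).comp x P.hasFDerivAt
  have hCx : ∀ {x : Fin n → ℝ}, x ∈ U →
      HasFDerivAt (fun y => g3 (P y)) ((g4 (P x)).comp P) x := fun {x} hx =>
    (hg3d (hPM hx)).comp x P.hasFDerivAt
  have hGd : ∀ {x : Fin n → ℝ}, x ∈ U → HasFDerivAt G (DG x) x := by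
    intro x hx
    exact ((hAx hx).clm_apply Q.hasFDerivAt).add
      ((((hBx hx).clm_apply Q.hasFDerivAt).clm_apply Q.hasFDerivAt).const_smul (1/2 : ℝ))
  have hfdG : ∀ {x : Fin n → ℝ}, x ∈ U → fderiv ℝ G x = DG x := fun hx => (hGd hx).fderiv
  -- smoothness
  have hPmapsTo : Set.MapsTo (⇑P) U M := fun x hx => hPM hx
  have hAsm : ContDiffOn ℝ (⊤ : ℕ∞) (fun y => α (P y)) U :=
    hα.comp P.contDiff.contDiffOn hPmapsTo
  have hBsm : ContDiffOn ℝ (⊤ : ℕ∞) (fun y => g2 (P y)) U :=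
    hg2sm.comp P.contDiff.contDiffOn hPmapsTo
  have hQsm : ContDiffOn ℝ (⊤ : ℕ∞) (⇑Q) U := Q.contDiff.contDiffOn
  have hGsm : ContDiffOn ℝ (⊤ : ℕ∞) G U :=
    (hAsm.clm_apply hQsm).add
      (((hBsm.clm_apply hQsm).clm_apply hQsm).const_smul (1/2 : ℝ))
  have hμsm : ContDiffOn ℝ (⊤ : ℕ∞) μ U :=
    (hAsm.clm_apply contDiffOn_const).smul contDiffOn_const
  have hfdGsm : ContDiffOn ℝ (⊤ : ℕ∞) (fderiv ℝ G) U := auxFderiv hGsm hUopen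
  -- derivative of μ
  have hμd : ∀ {x : Fin n → ℝ}, x ∈ U →
      HasFDerivAt μ ((α (P x) e₀) • (0 : (Fin n → ℝ) →L[ℝ] (Fin n → ℝ) →L[ℝ] ℝ) +
        ((α (P x)).comp (0 : (Fin n → ℝ) →L[ℝ] (Fin n → ℝ)) + ((g2 (P x)).comp P).flip e₀).smulRight pr) x := by
    intro x hx
    exact ((hAx hx).clm_apply (hasFDerivAt_const e₀ x)).smul (hasFDerivAt_const pr x)
  -- choose β
  refine ⟨U, hball, hUopen, h0U, fun x => α x - (μ x + fderiv ℝ G x), ?_, ?_, ?_⟩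
  · exact (hα.mono hball).sub (hμsm.add hfdGsm)
  · -- the antisymmetric parts of the derivatives agree
    intro x hxU u v
    have hxM : x ∈ M := hball hxU
    have hdα' : DifferentiableAt ℝ α x := (hαd hxM).differentiableAt
    have hdμ : DifferentiableAt ℝ μ x := (hμd hxU).differentiableAt
    have hdG2 : DifferentiableAt ℝ (fderiv ℝ G) x :=
      (auxHasFDerivAt hfdGsm hUopen hxU).differentiableAt
    have hrw : fderiv ℝ (fun y => α y - (μ y + fderiv ℝ G y)) x
        = fderiv ℝ α x - (fderiv ℝ μ x + fderiv ℝ (fderiv ℝ G) x) := by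
      rw [fderiv_fun_sub hdα' (hdμ.fun_add hdG2), fderiv_fun_add hdμ hdG2]
    have hsymG : fderiv ℝ (fderiv ℝ G) x u v = fderiv ℝ (fderiv ℝ G) x v u :=
      (((hGsm x hxU).contDiffAt (hUopen.mem_nhds hxU)).isSymmSndFDerivAt
        (by rw [minSmoothness_of_isRCLikeNormedField]; exact WithTop.coe_le_coe.mpr le_top)) u v
    have hsymμ : fderiv ℝ μ x u v = fderiv ℝ μ x v u := by
      rw [(hμd hxU).fderiv]
      simp [hPapp, ContinuousLinearMap.add_apply, ContinuousLinearMap.smul_apply,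
        ContinuousLinearMap.smulRight_apply, ContinuousLinearMap.comp_apply,
        ContinuousLinearMap.flip_apply, map_smul, smul_eq_mul, hpr]
      ring
    rw [hrw]
    simp only [ContinuousLinearMap.sub_apply, ContinuousLinearMap.add_apply]
    linarith [hsymG, hsymμ]
  · intro p hpU hp
    have hpM : p ∈ M := hball hpU
    have hPp : P p = p := by
      rw [hPapp]; funext i
      rcases eq_or_ne i 0 with h | h
      · subst h; simp [he₀]
      · have hiv : (i : ℕ) ≠ 0 := fun hc => h (Fin.ext hc)
        simp [he₀, Pi.single_eq_of_ne h, hp i hiv]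
    have hQp : Q p = 0 := by rw [hQapp, hPp, sub_self]
    have hsym : ∀ a b : Fin n → ℝ, g2 p a b = g2 p b a := hdα p hpM hp
    have hdG2p : DifferentiableAt ℝ (fderiv ℝ G) p :=
      (auxHasFDerivAt hfdGsm hUopen hpU).differentiableAt
    have hdμp : DifferentiableAt ℝ μ p := (hμd hpU).differentiableAt
    have hdαp : DifferentiableAt ℝ α p := (hαd hpM).differentiableAt
    constructor
    · show α p - (μ p + fderiv ℝ G p) = 0
      rw [hfdG hpU]
      ext v
      rw [hDGdef, hμdef]
      simp only [ContinuousLinearMap.sub_apply, ContinuousLinearMap.add_apply,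
        ContinuousLinearMap.smul_apply, ContinuousLinearMap.comp_apply,
        ContinuousLinearMap.flip_apply, ContinuousLinearMap.smulRight_apply,
        ContinuousLinearMap.zero_apply, hQp, hPp, map_zero, smul_eq_mul, hpr,
        ContinuousLinearMap.proj_apply, ContinuousLinearMap.zero_apply]
      rw [hQapp v, hPapp v]
      simp only [map_sub, map_smul, smul_eq_mul]
      ring
    · have hrw : fderiv ℝ (fun y => α y - (μ y + fderiv ℝ G y)) p
          = fderiv ℝ α p - (fderiv ℝ μ p + fderiv ℝ (fderiv ℝ G) p) := by
        rw [fderiv_fun_sub hdαp (hdμp.fun_add hdG2p), fderiv_fun_add hdμp hdG2p]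
      rw [hrw]
      ext u v
      have h1 : fderiv ℝ (fun y => fderiv ℝ G y v) p = (fderiv ℝ (fderiv ℝ G) p).flip v := by
        rw [fderiv_clm_apply hdG2p (differentiableAt_const v)]
        ext w; simp
      have heq : (fun y => fderiv ℝ G y v) =ᶠ[nhds p] (fun y =>
          ((α (P y)) (Q v) + ((g2 (P y)) (P v)) (Q y)) + (1/2 : ℝ) • (((g2 (P y)) (Q y)) (Q v)
            + (((g2 (P y)) (Q v)) (Q y) + (((g3 (P y)) (P v)) (Q y)) (Q y)))) := by
        filter_upwards [hUopen.mem_nhds hpU] with y hy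
        rw [hfdG hy, hDGdef]
        simp only [ContinuousLinearMap.add_apply, ContinuousLinearMap.smul_apply,
          ContinuousLinearMap.comp_apply, ContinuousLinearMap.flip_apply]
      have hder := (((hAx hpU).clm_apply (hasFDerivAt_const (Q v) p)).add
          (((hBx hpU).clm_apply (hasFDerivAt_const (P v) p)).clm_apply Q.hasFDerivAt)).add
        (((((hBx hpU).clm_apply Q.hasFDerivAt).clm_apply (hasFDerivAt_const (Q v) p)).add
          ((((hBx hpU).clm_apply (hasFDerivAt_const (Q v) p)).clm_apply Q.hasFDerivAt).add
            ((((hCx hpU).clm_apply (hasFDerivAt_const (P v) p)).clm_apply Q.hasFDerivAt).clm_apply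
              Q.hasFDerivAt))).const_smul (1/2 : ℝ))
      have h4 := (heq.fderiv_eq).trans hder.fderiv
      have hS : fderiv ℝ (fderiv ℝ G) p u v
          = g2 p (P u) (Q v) + g2 p (P v) (Q u)
            + (1/2 : ℝ) * (g2 p (Q u) (Q v) + g2 p (Q v) (Q u)) := by
        have h5 : fderiv ℝ (fderiv ℝ G) p u v = fderiv ℝ (fun y => fderiv ℝ G y v) p u := by
          rw [h1]; simp
        rw [h5, h4]
        simp only [ContinuousLinearMap.add_apply, ContinuousLinearMap.smul_apply,
          ContinuousLinearMap.comp_apply, ContinuousLinearMap.flip_apply,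
          ContinuousLinearMap.zero_apply, hQp, hPp, map_zero, smul_eq_mul,
          ContinuousLinearMap.zero_comp, ContinuousLinearMap.comp_zero]
        ring
      simp only [ContinuousLinearMap.sub_apply, ContinuousLinearMap.add_apply,
        ContinuousLinearMap.zero_apply]
      rw [hS, (hμd hpU).fderiv]
      simp only [ContinuousLinearMap.add_apply, ContinuousLinearMap.smul_apply,
        ContinuousLinearMap.zero_apply, ContinuousLinearMap.smulRight_apply,
        ContinuousLinearMap.comp_apply, ContinuousLinearMap.flip_apply, smul_eq_mul,
        hpr, ContinuousLinearMap.proj_apply, hPp]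
      rw [← hg2def]
      have huu : (u : Fin n → ℝ) = u 0 • e₀ + Q u := by
        rw [← hPapp]; exact (hPQ u).symm
      have hvv : (v : Fin n → ℝ) = v 0 • e₀ + Q v := by
        rw [← hPapp]; exact (hPQ v).symm
      have hexp : g2 p u v = u 0 * (v 0 * g2 p e₀ e₀) + u 0 * g2 p e₀ (Q v)
          + (v 0 * g2 p (Q u) e₀ + g2 p (Q u) (Q v)) := by
        conv_lhs => rw [huu, hvv]
        simp [map_add, map_smul, ContinuousLinearMap.add_apply,
          ContinuousLinearMap.smul_apply, smul_eq_mul]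
        ring
      rw [hexp, map_zero, hPapp u, hPapp v]
      simp only [map_smul, smul_eq_mul, ContinuousLinearMap.smul_apply, map_zero,
        mul_zero, zero_add, ContinuousLinearMap.zero_apply]
      rw [hsym (Q u) e₀, hsym (Q v) (Q u)]
      ring


end
end

section
/- Let p₁, p₂, p₃ ∈ C^∞(ℝ⁴,ℝ) satisfy assumptions (A1) and (A2), set ∂ = p₁σ₁ + p₂σ₂ + p₃σ₃, λ_∂ = ({p₁,p₂}² + {p₂,p₃}² + {p₃,p₁}²)^{1/4}, and, on the open set where λ_∂ ≠ 0, define the vector field V_∂ = −({p₂,p₃}H_{p₁} + {p₃,p₁}H_{p₂} + {p₁,p₂}H_{p₃})/λ_∂². Suppose κ is a symplectomorphism from a neighborhood of 0 in ℝ⁴ into ℝ⁴ with κ(0) ∈ Γ, λ : ℝ → (0,∞) and μ : ℝ → ℝ are smooth, U : ℝ⁴ → SU(2) is smooth, and every entry of U(x,ξ)·∂(κ(x,ξ))·U(x,ξ)* − (λ(x₁) + μ(x₁)ξ₁)·𝔡₀(x,ξ) is 𝒪(3) on a neighborhood of 0. Then for all x₁ in a neighborhood of 0 the point κ(x₁,0,0,0)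 belongs to Γ, and λ_∂(κ(x₁,0,0,0)) = λ(x₁) and V_∂(κ(x₁,0,0,0)) = Dκ(x₁,0,0,0)·(λ(x₁),0,0,0). -/
open Matrix Complex

noncomputable section

def pauli1 : Matrix (Fin 2) (Fin 2) ℂ := !![0, 1; 1, 0]
def pauli2 : Matrix (Fin 2) (Fin 2) ℂ := !![0, -I; I, 0]
def pauli3 : Matrix (Fin 2) (Fin 2) ℂ := !![1, 0; 0, -1]

def MemSU2 (U : Matrix (Fin 2) (Fin 2) ℂ) : Prop :=
  Uᴴ * U = 1 ∧ U.det = 1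

def omega4 (u v : Fin 4 → ℝ) : ℝ :=
  u 2 * v 0 + u 3 * v 1 - u 0 * v 2 - u 1 * v 3

/-- Poisson bracket on `ℝ⁴`, coordinates `(x₁,x₂,ξ₁,ξ₂) = (z 0, z 1, z 2, z 3)`. -/
def pb (f g : (Fin 4 → ℝ) → ℝ) (z : Fin 4 → ℝ) : ℝ :=
  fderiv ℝ f z (Pi.single 2 1) * fderiv ℝ g z (Pi.single 0 1)
  + fderiv ℝ f z (Pi.single 3 1) * fderiv ℝ g z (Pi.single 1 1)
  - fderiv ℝ f z (Pi.single 0 1) * fderiv ℝ g z (Pi.single 2 1)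
  - fderiv ℝ f z (Pi.single 1 1) * fderiv ℝ g z (Pi.single 3 1)

/-- The Hamiltonian vector field `H_f = (∂f/∂ξ₁, ∂f/∂ξ₂, −∂f/∂x₁, −∂f/∂x₂)`. -/
def hamVF (f : (Fin 4 → ℝ) → ℝ) (z : Fin 4 → ℝ) : Fin 4 → ℝ :=
  ![fderiv ℝ f z (Pi.single 2 1), fderiv ℝ f z (Pi.single 3 1),
    -fderiv ℝ f z (Pi.single 0 1), -fderiv ℝ f z (Pi.single 1 1)]

def lamPartial (p₁ p₂ p₃ : (Fin 4 → ℝ) → ℝ) (z : Fin 4 → ℝ) : ℝ :=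
  ((pb p₁ p₂ z) ^ 2 + (pb p₂ p₃ z) ^ 2 + (pb p₃ p₁ z) ^ 2) ^ ((1 : ℝ) / 4)

/-- `V_∂ = −({p₂,p₃}H_{p₁} + {p₃,p₁}H_{p₂} + {p₁,p₂}H_{p₃})/λ_∂²`. -/
def Vpartial (p₁ p₂ p₃ : (Fin 4 → ℝ) → ℝ) (z : Fin 4 → ℝ) : Fin 4 → ℝ :=
  -((lamPartial p₁ p₂ p₃ z) ^ 2)⁻¹ •
    (pb p₂ p₃ z • hamVF p₁ z + pb p₃ p₁ z • hamVF p₂ z + pb p₁ p₂ z • hamVF p₃ z)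

def Gam (p₁ p₂ p₃ : (Fin 4 → ℝ) → ℝ) : Set (Fin 4 → ℝ) :=
  {z | p₁ z = 0 ∧ p₂ z = 0 ∧ p₃ z = 0}

def pi4 (z : Fin 4 → ℝ) : Fin 2 → ℝ := ![z 0, z 1]

def A1 (p₁ p₂ p₃ : (Fin 4 → ℝ) → ℝ) : Prop :=
  ∀ z ∈ Gam p₁ p₂ p₃,
    LinearIndependent ℝ ![fderiv ℝ p₁ z, fderiv ℝ p₂ z, fderiv ℝ p₃ z]

def IsEmbeddedCurve (C : Set (Fin 2 → ℝ)) : Prop :=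
  ∀ p ∈ C, ∃ (V : Set (Fin 2 → ℝ)) (Φ Ψ : (Fin 2 → ℝ) → (Fin 2 → ℝ)),
    IsOpen V ∧ p ∈ V ∧ ContDiffOn ℝ (⊤ : ℕ∞) Φ V ∧ Set.InjOn Φ V ∧
    IsOpen (Φ '' V) ∧ ContDiffOn ℝ (⊤ : ℕ∞) Ψ (Φ '' V) ∧
    (∀ x ∈ V, Ψ (Φ x) = x) ∧
    Φ '' (V ∩ C) = (Φ '' V) ∩ {y | y 1 = 0}

def A2 (p₁ p₂ p₃ : (Fin 4 → ℝ) → ℝ) : Prop :=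
  IsEmbeddedCurve (pi4 '' Gam p₁ p₂ p₃)

def IsBigOC (n : ℕ) (U : Set (Fin 4 → ℝ)) (f : (Fin 4 → ℝ) → ℂ) : Prop :=
  ∃ r : ℕ × ℕ × ℕ → (Fin 4 → ℝ) → ℂ,
    (∀ m, ContDiffOn ℝ (⊤ : ℕ∞) (r m) U) ∧
    ∀ z ∈ U, f z =
      ∑ m ∈ (Finset.range (n+1) ×ˢ Finset.range (n+1) ×ˢ Finset.range (n+1)).filter
          (fun m : ℕ × ℕ × ℕ => m.1 + m.2.1 + m.2.2 = n),
        (z 1 : ℂ) ^ m.1 * (z 2 : ℂ) ^ m.2.1 * (z 3 : ℂ) ^ m.2.2 * r m z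

def diracSymbol (p₁ p₂ p₃ : (Fin 4 → ℝ) → ℝ) (z : Fin 4 → ℝ) :
    Matrix (Fin 2) (Fin 2) ℂ :=
  (p₁ z : ℂ) • pauli1 + (p₂ z : ℂ) • pauli2 + (p₃ z : ℂ) • pauli3

def d0 (z : Fin 4 → ℝ) : Matrix (Fin 2) (Fin 2) ℂ :=
  !![(z 2 : ℝ), (z 1 : ℝ) - I * (z 3 : ℝ);
     (z 1 : ℝ) + I * (z 3 : ℝ), -(z 2 : ℝ)]

/- ## Auxiliary lemmas -/

lemma clm_decomp {M : Type*} [NormedAddCommGroup M] [NormedSpace ℝ M]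
    (D : (Fin 4 → ℝ) →L[ℝ] M) (v : Fin 4 → ℝ) :
    D v = v 0 • D (Pi.single 0 1) + v 1 • D (Pi.single 1 1)
      + v 2 • D (Pi.single 2 1) + v 3 • D (Pi.single 3 1) := by
  have hv : v = v 0 • (Pi.single 0 1 : Fin 4 → ℝ) + v 1 • (Pi.single 1 1 : Fin 4 → ℝ)
      + v 2 • (Pi.single 2 1 : Fin 4 → ℝ) + v 3 • (Pi.single 3 1 : Fin 4 → ℝ) := by
    funext i; fin_cases i <;> simp [Pi.single_apply]
  conv_lhs => rw [hv]
  simp [map_add, _root_.map_smul]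

lemma omega4_eq_zero (w : Fin 4 → ℝ) (h : ∀ v, omega4 w v = 0) : w = 0 := by
  have h0 := h (Pi.single 2 1)
  have h1 := h (Pi.single 3 1)
  have h2 := h (Pi.single 0 1)
  have h3 := h (Pi.single 1 1)
  simp [omega4, Pi.single_apply] at h0 h1 h2 h3
  funext i; fin_cases i <;> simp_all

lemma omega4_hamVF (f : (Fin 4 → ℝ) → ℝ) (z : Fin 4 → ℝ) (v : Fin 4 → ℝ) :
    omega4 (hamVF f z) v = -(fderiv ℝ f z v) := by
  rw [clm_decomp (fderiv ℝ f z) v]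
  simp [omega4, hamVF, smul_eq_mul]
  ring

lemma pb_eq (f g : (Fin 4 → ℝ) → ℝ) (z : Fin 4 → ℝ) :
    pb f g z = fderiv ℝ g z (hamVF f z) := by
  rw [clm_decomp (fderiv ℝ g z) (hamVF f z)]
  simp [pb, hamVF, smul_eq_mul]
  ring

lemma hasFDerivAt_mul_of_zero {F G : (Fin 4 → ℝ) → ℂ} {z₀ : Fin 4 → ℝ}
    (hF : DifferentiableAt ℝ F z₀) (hG : DifferentiableAt ℝ G z₀)
    (h0F : F z₀ = 0) (h0G : G z₀ = 0) :
    HasFDerivAt (fun z => F z * G z) (0 : (Fin 4 → ℝ) →L[ℝ] ℂ) z₀ := by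
  have h := HasFDerivAt.mul (𝕜 := ℝ) hF.hasFDerivAt hG.hasFDerivAt
  have e : F z₀ • fderiv ℝ G z₀ + G z₀ • fderiv ℝ F z₀ = (0 : (Fin 4 → ℝ) →L[ℝ] ℂ) := by
    rw [h0F, h0G]; ext v; simp
  exact e ▸ h

lemma diffAt_coord (a : Fin 4) (z₀ : Fin 4 → ℝ) :
    DifferentiableAt ℝ (fun z : Fin 4 → ℝ => ((z a : ℝ) : ℂ)) z₀ :=
  (Complex.ofRealCLM.comp
    (ContinuousLinearMap.proj a : (Fin 4 → ℝ) →L[ℝ] ℝ)).differentiableAt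

lemma term_hasFDerivAt {z₀ : Fin 4 → ℝ} (h1 : z₀ 1 = 0) (h2 : z₀ 2 = 0) (h3 : z₀ 3 = 0)
    (j k l : ℕ) (hsum : j + k + l = 3) {r : (Fin 4 → ℝ) → ℂ}
    (hr : DifferentiableAt ℝ r z₀) :
    HasFDerivAt (fun z : Fin 4 → ℝ => ((z 1 : ℝ) : ℂ) ^ j * ((z 2 : ℝ) : ℂ) ^ k
      * ((z 3 : ℝ) : ℂ) ^ l * r z) (0 : (Fin 4 → ℝ) →L[ℝ] ℂ) z₀ := by
  have hd : ∀ (j' k' l' : ℕ), DifferentiableAt ℝ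
      (fun z : Fin 4 → ℝ => ((z 1 : ℝ) : ℂ) ^ j' * ((z 2 : ℝ) : ℂ) ^ k'
        * ((z 3 : ℝ) : ℂ) ^ l' * r z) z₀ := fun j' k' l' =>
    ((((diffAt_coord 1 z₀).pow j').mul ((diffAt_coord 2 z₀).pow k')).mul
      ((diffAt_coord 3 z₀).pow l')).mul hr
  have hval : ∀ (j' k' l' : ℕ), (j' ≠ 0 ∨ k' ≠ 0 ∨ l' ≠ 0) →
      ((z₀ 1 : ℝ) : ℂ) ^ j' * ((z₀ 2 : ℝ) : ℂ) ^ k' * ((z₀ 3 : ℝ) : ℂ) ^ l' * r z₀ = 0 := by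
    rintro j' k' l' (h | h | h)
    · simp [h1, zero_pow h]
    · simp [h2, zero_pow h]
    · simp [h3, zero_pow h]
  rcases j with _ | j'
  · rcases k with _ | k'
    · have hl : l = 3 := by omega
      subst hl
      have heq : (fun z : Fin 4 → ℝ => ((z 1 : ℝ) : ℂ) ^ 0 * ((z 2 : ℝ) : ℂ) ^ 0
          * ((z 3 : ℝ) : ℂ) ^ 3 * r z)
          = fun z => ((z 3 : ℝ) : ℂ) * (((z 1 : ℝ) : ℂ) ^ 0 * ((z 2 : ℝ) : ℂ) ^ 0
            * ((z 3 : ℝ) : ℂ) ^ 2 * r z) := by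
        funext z; ring
      rw [heq]
      exact hasFDerivAt_mul_of_zero (diffAt_coord 3 z₀) (hd 0 0 2) (by simp [h3])
        (hval 0 0 2 (by omega))
    · have heq : (fun z : Fin 4 → ℝ => ((z 1 : ℝ) : ℂ) ^ 0 * ((z 2 : ℝ) : ℂ) ^ (k' + 1)
          * ((z 3 : ℝ) : ℂ) ^ l * r z)
          = fun z => ((z 2 : ℝ) : ℂ) * (((z 1 : ℝ) : ℂ) ^ 0 * ((z 2 : ℝ) : ℂ) ^ k'
            * ((z 3 : ℝ) : ℂ) ^ l * r z) := by
        funext z; ring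
      rw [heq]
      exact hasFDerivAt_mul_of_zero (diffAt_coord 2 z₀) (hd 0 k' l) (by simp [h2])
        (hval 0 k' l (by omega))
  · have heq : (fun z : Fin 4 → ℝ => ((z 1 : ℝ) : ℂ) ^ (j' + 1) * ((z 2 : ℝ) : ℂ) ^ k
        * ((z 3 : ℝ) : ℂ) ^ l * r z)
        = fun z => ((z 1 : ℝ) : ℂ) * (((z 1 : ℝ) : ℂ) ^ j' * ((z 2 : ℝ) : ℂ) ^ k
          * ((z 3 : ℝ) : ℂ) ^ l * r z) := by
      funext z; ring
    rw [heq]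
    exact hasFDerivAt_mul_of_zero (diffAt_coord 1 z₀) (hd j' k l) (by simp [h1])
      (hval j' k l (by omega))

lemma isBigOC_eval {Vs : Set (Fin 4 → ℝ)} (hV : IsOpen Vs) {f : (Fin 4 → ℝ) → ℂ}
    (h : IsBigOC 3 Vs f) {z₀ : Fin 4 → ℝ} (hz : z₀ ∈ Vs)
    (h1 : z₀ 1 = 0) (h2 : z₀ 2 = 0) (h3 : z₀ 3 = 0) :
    f z₀ = 0 ∧ HasFDerivAt f (0 : (Fin 4 → ℝ) →L[ℝ] ℂ) z₀ := by
  obtain ⟨r, hrs, hrep⟩ := h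
  have hrd : ∀ m, DifferentiableAt ℝ (r m) z₀ := fun m =>
    ((hrs m).contDiffAt (hV.mem_nhds hz)).differentiableAt (by simp)
  constructor
  · rw [hrep z₀ hz]
    apply Finset.sum_eq_zero
    intro m hm
    have hm3 : m.1 + m.2.1 + m.2.2 = 3 := (Finset.mem_filter.mp hm).2
    rcases (by omega : m.1 ≠ 0 ∨ m.2.1 ≠ 0 ∨ m.2.2 ≠ 0) with h | h | h
    · simp [h1, zero_pow h]
    · simp [h2, zero_pow h]
    · simp [h3, zero_pow h]
  · have hsum : HasFDerivAt (fun z : Fin 4 → ℝ =>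
        ∑ m ∈ (Finset.range 4 ×ˢ Finset.range 4 ×ˢ Finset.range 4).filter
          (fun m : ℕ × ℕ × ℕ => m.1 + m.2.1 + m.2.2 = 3),
        (z 1 : ℂ) ^ m.1 * (z 2 : ℂ) ^ m.2.1 * (z 3 : ℂ) ^ m.2.2 * r m z)
        (∑ m ∈ (Finset.range 4 ×ˢ Finset.range 4 ×ˢ Finset.range 4).filter
          (fun m : ℕ × ℕ × ℕ => m.1 + m.2.1 + m.2.2 = 3),
          (0 : (Fin 4 → ℝ) →L[ℝ] ℂ)) z₀ := by
      apply HasFDerivAt.fun_sum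
      intro m hm
      exact term_hasFDerivAt h1 h2 h3 _ _ _ (Finset.mem_filter.mp hm).2 (hrd m)
    simp only [Finset.sum_const_zero] at hsum
    exact hsum.congr_of_eventuallyEq
      (Filter.eventuallyEq_of_mem (hV.mem_nhds hz) (fun z hz' => hrep z hz'))

lemma hasFDerivAt_umv {u m v : (Fin 4 → ℝ) → ℂ} {m' : (Fin 4 → ℝ) →L[ℝ] ℂ}
    {z₀ : Fin 4 → ℝ} (hu : DifferentiableAt ℝ u z₀) (hm : HasFDerivAt m m' z₀)
    (hv : DifferentiableAt ℝ v z₀) (h0 : m z₀ = 0) :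
    HasFDerivAt (fun z => u z * m z * v z) ((u z₀ * v z₀) • m') z₀ := by
  have h := HasFDerivAt.mul (𝕜 := ℝ) (HasFDerivAt.mul (𝕜 := ℝ) hu.hasFDerivAt hm)
    hv.hasFDerivAt
  have e : (fun z => u z * m z) z₀ • fderiv ℝ v z₀
      + v z₀ • (u z₀ • m' + m z₀ • fderiv ℝ u z₀) = (u z₀ * v z₀) • m' := by
    ext x; simp [h0, smul_smul, mul_comm]
  exact e ▸ h

lemma hamVF_transfer {κ : (Fin 4 → ℝ) → (Fin 4 → ℝ)} {z₀ : Fin 4 → ℝ}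
    (hκdiff : DifferentiableAt ℝ κ z₀)
    (hsymp : ∀ u v, omega4 (fderiv ℝ κ z₀ u) (fderiv ℝ κ z₀ v) = omega4 u v)
    {p : (Fin 4 → ℝ) → ℝ} (hp : ContDiff ℝ (⊤ : ℕ∞) p) :
    fderiv ℝ κ z₀ (hamVF (fun z => p (κ z)) z₀) = hamVF p (κ z₀) := by
  have hpd : DifferentiableAt ℝ p (κ z₀) :=
    (hp.differentiable (by simp)).differentiableAt
  have hcomp : fderiv ℝ (fun z => p (κ z)) z₀ = (fderiv ℝ p (κ z₀)).comp (fderiv ℝ κ z₀) :=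
    fderiv_comp z₀ hpd hκdiff
  have hinj : Function.Injective (fderiv ℝ κ z₀) := by
    intro u v huv
    have hz : ∀ w, omega4 (u - v) w = 0 := by
      intro w
      have h1 := hsymp (u - v) w
      rw [map_sub, huv] at h1
      simp [omega4] at h1 ⊢
      linarith
    exact sub_eq_zero.mp (omega4_eq_zero _ hz)
  have hsurj : Function.Surjective (fderiv ℝ κ z₀) :=
    (LinearMap.injective_iff_surjective
      (f := (fderiv ℝ κ z₀ : (Fin 4 → ℝ) →L[ℝ] (Fin 4 → ℝ)).toLinearMap)).mp hinj
  have key : ∀ w, omega4 (fderiv ℝ κ z₀ (hamVF (fun z => p (κ z)) z₀)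
      - hamVF p (κ z₀)) w = 0 := by
    intro w
    obtain ⟨w', rfl⟩ := hsurj w
    have e1 : omega4 (fderiv ℝ κ z₀ (hamVF (fun z => p (κ z)) z₀)) (fderiv ℝ κ z₀ w')
        = omega4 (hamVF (fun z => p (κ z)) z₀) w' := hsymp _ _
    have e2 : omega4 (hamVF (fun z => p (κ z)) z₀) w'
        = -(fderiv ℝ (fun z => p (κ z)) z₀ w') := omega4_hamVF _ _ _
    have e3 : omega4 (hamVF p (κ z₀)) (fderiv ℝ κ z₀ w')
        = -(fderiv ℝ p (κ z₀) (fderiv ℝ κ z₀ w')) := omega4_hamVF _ _ _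
    have e4 : fderiv ℝ (fun z => p (κ z)) z₀ w'
        = fderiv ℝ p (κ z₀) (fderiv ℝ κ z₀ w') := by
      rw [hcomp]; rfl
    simp only [omega4, Pi.sub_apply] at *
    linarith [e1, e2, e3, e4]
  exact sub_eq_zero.mp (omega4_eq_zero _ key)

lemma pb_transfer {κ : (Fin 4 → ℝ) → (Fin 4 → ℝ)} {z₀ : Fin 4 → ℝ}
    (hκdiff : DifferentiableAt ℝ κ z₀)
    (hsymp : ∀ u v, omega4 (fderiv ℝ κ z₀ u) (fderiv ℝ κ z₀ v) = omega4 u v)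
    {p q : (Fin 4 → ℝ) → ℝ} (hp : ContDiff ℝ (⊤ : ℕ∞) p) (hq : ContDiff ℝ (⊤ : ℕ∞) q) :
    pb p q (κ z₀) = pb (fun z => p (κ z)) (fun z => q (κ z)) z₀ := by
  have hqd : DifferentiableAt ℝ q (κ z₀) :=
    (hq.differentiable (by simp)).differentiableAt
  have hcomp : fderiv ℝ (fun z => q (κ z)) z₀ = (fderiv ℝ q (κ z₀)).comp (fderiv ℝ κ z₀) :=
    fderiv_comp z₀ hqd hκdiff
  rw [pb_eq, pb_eq, ← hamVF_transfer hκdiff hsymp hp, hcomp]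
  rfl

/-- the constant linear maps that are the entries of `d0`. -/
def LL : Matrix (Fin 2) (Fin 2) ((Fin 4 → ℝ) →L[ℝ] ℂ) :=
  !![Complex.ofRealCLM.comp (ContinuousLinearMap.proj 2),
     Complex.ofRealCLM.comp (ContinuousLinearMap.proj 1)
       - I • Complex.ofRealCLM.comp (ContinuousLinearMap.proj 3) ;
     Complex.ofRealCLM.comp (ContinuousLinearMap.proj 1)
       + I • Complex.ofRealCLM.comp (ContinuousLinearMap.proj 3),
     -(Complex.ofRealCLM.comp (ContinuousLinearMap.proj 2))]

lemma d0_eq_LL (c d : Fin 2) : (fun z : Fin 4 → ℝ => d0 z c d) = ⇑(LL c d) := by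
  fin_cases c <;> fin_cases d <;> funext z <;>
    simp [d0, LL, ContinuousLinearMap.comp_apply, ContinuousLinearMap.proj_apply,
      ContinuousLinearMap.sub_apply, ContinuousLinearMap.add_apply,
      ContinuousLinearMap.smul_apply, ContinuousLinearMap.neg_apply]

lemma d0_val_zero {z₀ : Fin 4 → ℝ} (h1 : z₀ 1 = 0) (h2 : z₀ 2 = 0) (h3 : z₀ 3 = 0)
    (c d : Fin 2) : d0 z₀ c d = 0 := by
  fin_cases c <;> fin_cases d <;> simp [d0, h1, h2, h3]

/-- derivative of a conjugated matrix entry. -/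
def Dab (U0 : Matrix (Fin 2) (Fin 2) ℂ) (lamv : ℝ) (a b : Fin 2) :
    (Fin 4 → ℝ) →L[ℝ] ℂ :=
  ((starRingEnd ℂ) (U0 0 a) * U0 0 b) • ((lamv : ℂ) • LL 0 0)
  + ((starRingEnd ℂ) (U0 0 a) * U0 1 b) • ((lamv : ℂ) • LL 0 1)
  + ((starRingEnd ℂ) (U0 1 a) * U0 0 b) • ((lamv : ℂ) • LL 1 0)
  + ((starRingEnd ℂ) (U0 1 a) * U0 1 b) • ((lamv : ℂ) • LL 1 1)

lemma Dab_single0 (U0 : Matrix (Fin 2) (Fin 2) ℂ) (lamv : ℝ) (a b : Fin 2) :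
    (Dab U0 lamv a b) (Pi.single 0 1) = 0 := by
  simp [Dab, LL, ContinuousLinearMap.add_apply, ContinuousLinearMap.sub_apply,
    ContinuousLinearMap.smul_apply, ContinuousLinearMap.comp_apply,
    ContinuousLinearMap.proj_apply, ContinuousLinearMap.neg_apply, Pi.single_apply]

lemma Dab_single1 (U0 : Matrix (Fin 2) (Fin 2) ℂ) (lamv : ℝ) (a b : Fin 2) :
    (Dab U0 lamv a b) (Pi.single 1 1)
      = (lamv : ℂ) * ((starRingEnd ℂ) (U0 0 a) * U0 1 b
        + (starRingEnd ℂ) (U0 1 a) * U0 0 b) := by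
  simp [Dab, LL, ContinuousLinearMap.add_apply, ContinuousLinearMap.sub_apply,
    ContinuousLinearMap.smul_apply, ContinuousLinearMap.comp_apply,
    ContinuousLinearMap.proj_apply, ContinuousLinearMap.neg_apply, Pi.single_apply]
  ring

lemma Dab_single2 (U0 : Matrix (Fin 2) (Fin 2) ℂ) (lamv : ℝ) (a b : Fin 2) :
    (Dab U0 lamv a b) (Pi.single 2 1)
      = (lamv : ℂ) * ((starRingEnd ℂ) (U0 0 a) * U0 0 b
        - (starRingEnd ℂ) (U0 1 a) * U0 1 b) := by
  simp [Dab, LL, ContinuousLinearMap.add_apply, ContinuousLinearMap.sub_apply,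
    ContinuousLinearMap.smul_apply, ContinuousLinearMap.comp_apply,
    ContinuousLinearMap.proj_apply, ContinuousLinearMap.neg_apply, Pi.single_apply]
  ring

lemma Dab_single3 (U0 : Matrix (Fin 2) (Fin 2) ℂ) (lamv : ℝ) (a b : Fin 2) :
    (Dab U0 lamv a b) (Pi.single 3 1)
      = (lamv : ℂ) * (I * (starRingEnd ℂ) (U0 1 a) * U0 0 b
        - I * (starRingEnd ℂ) (U0 0 a) * U0 1 b) := by
  simp [Dab, LL, ContinuousLinearMap.add_apply, ContinuousLinearMap.sub_apply,
    ContinuousLinearMap.smul_apply, ContinuousLinearMap.comp_apply,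
    ContinuousLinearMap.proj_apply, ContinuousLinearMap.neg_apply, Pi.single_apply]
  ring

lemma dirac_00 (p₁ p₂ p₃ : (Fin 4 → ℝ) → ℝ) (w : Fin 4 → ℝ) :
    diracSymbol p₁ p₂ p₃ w 0 0 = ((p₃ w : ℝ) : ℂ) := by
  simp [diracSymbol, pauli1, pauli2, pauli3]

lemma dirac_10 (p₁ p₂ p₃ : (Fin 4 → ℝ) → ℝ) (w : Fin 4 → ℝ) :
    diracSymbol p₁ p₂ p₃ w 1 0 = ((p₁ w : ℝ) : ℂ) + I * ((p₂ w : ℝ) : ℂ) := by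
  simp [diracSymbol, pauli1, pauli2, pauli3]
  ring
lemma core
    (p₁ p₂ p₃ : (Fin 4 → ℝ) → ℝ)
    (hp₁ : ContDiff ℝ (⊤ : ℕ∞) p₁) (hp₂ : ContDiff ℝ (⊤ : ℕ∞) p₂)
    (hp₃ : ContDiff ℝ (⊤ : ℕ∞) p₃)
    (κ : (Fin 4 → ℝ) → (Fin 4 → ℝ))
    (lam mu : ℝ → ℝ) (hlam : ContDiff ℝ (⊤ : ℕ∞) lam) (hlampos : ∀ x, 0 < lam x)
    (hmu : ContDiff ℝ (⊤ : ℕ∞) mu)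
    (U : (Fin 4 → ℝ) → Matrix (Fin 2) (Fin 2) ℂ)
    (hUsm : ∀ i j, ContDiff ℝ (⊤ : ℕ∞) (fun z => U z i j))
    (hUSU2 : ∀ z, MemSU2 (U z))
    (V : Set (Fin 4 → ℝ)) (hV : IsOpen V)
    (hnfV : ∀ i j : Fin 2, IsBigOC 3 V (fun z =>
        (U z * diracSymbol p₁ p₂ p₃ (κ z) * (U z)ᴴ) i j -
          ((lam (z 0) + mu (z 0) * z 2 : ℝ) : ℂ) * d0 z i j))
    (x₁ : ℝ) (z₀ : Fin 4 → ℝ) (hz0 : z₀ 0 = x₁)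
    (h1 : z₀ 1 = 0) (h2 : z₀ 2 = 0) (h3 : z₀ 3 = 0) (hz₀V : z₀ ∈ V)
    (hκdiff : DifferentiableAt ℝ κ z₀)
    (hsymp : ∀ u v, omega4 (fderiv ℝ κ z₀ u) (fderiv ℝ κ z₀ v) = omega4 u v) :
    κ z₀ ∈ Gam p₁ p₂ p₃ ∧ lamPartial p₁ p₂ p₃ (κ z₀) = lam x₁ ∧
      Vpartial p₁ p₂ p₃ (κ z₀) = fderiv ℝ κ z₀ ![lam x₁, 0, 0, 0] := by
  have hbig := fun (c d : Fin 2) => isBigOC_eval hV (hnfV c d) hz₀V h1 h2 h3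
  have hMval : ∀ c d : Fin 2, (U z₀ * diracSymbol p₁ p₂ p₃ (κ z₀) * (U z₀)ᴴ) c d = 0 := by
    intro c d
    have := (hbig c d).1
    rw [d0_val_zero h1 h2 h3] at this
    simpa using this
  -- differentiability of the scalar coefficient
  have hproj0 : DifferentiableAt ℝ (fun z : Fin 4 → ℝ => z 0) z₀ :=
    (ContinuousLinearMap.proj 0 : (Fin 4 → ℝ) →L[ℝ] ℝ).differentiableAt
  have hproj2 : DifferentiableAt ℝ (fun z : Fin 4 → ℝ => z 2) z₀ :=
    (ContinuousLinearMap.proj 2 : (Fin 4 → ℝ) →L[ℝ] ℝ).differentiableAt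
  have hcoefR : DifferentiableAt ℝ (fun z : Fin 4 → ℝ => lam (z 0) + mu (z 0) * z 2) z₀ :=
    (((hlam.differentiable (by simp)).differentiableAt.comp z₀
      hproj0).add
      (((hmu.differentiable (by simp)).differentiableAt.comp z₀
        hproj0).mul hproj2))
  have hcoefDiff : DifferentiableAt ℝ
      (fun z : Fin 4 → ℝ => ((lam (z 0) + mu (z 0) * z 2 : ℝ) : ℂ)) z₀ :=
    Complex.ofRealCLM.differentiableAt.comp z₀ hcoefR
  -- derivatives of the entries of M
  have hMder : ∀ c d : Fin 2, HasFDerivAt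
      (fun z => (U z * diracSymbol p₁ p₂ p₃ (κ z) * (U z)ᴴ) c d)
      ((lam x₁ : ℂ) • LL c d) z₀ := by
    intro c d
    have hder0 := (hbig c d).2
    have hd0der : HasFDerivAt (fun z : Fin 4 → ℝ => d0 z c d) (LL c d) z₀ := by
      rw [d0_eq_LL]; exact (LL c d).hasFDerivAt
    have hprod := HasFDerivAt.mul (𝕜 := ℝ) hcoefDiff.hasFDerivAt hd0der
    have e : (fun z : Fin 4 → ℝ => ((lam (z 0) + mu (z 0) * z 2 : ℝ) : ℂ)) z₀ • LL c d
        + d0 z₀ c d • fderiv ℝ (fun z : Fin 4 → ℝ =>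
          ((lam (z 0) + mu (z 0) * z 2 : ℝ) : ℂ)) z₀
        = (lam x₁ : ℂ) • LL c d := by
      rw [d0_val_zero h1 h2 h3]
      ext v; simp [hz0, h2]
    rw [e] at hprod
    have heq : (fun z => (U z * diracSymbol p₁ p₂ p₃ (κ z) * (U z)ᴴ) c d)
        = fun z => ((lam (z 0) + mu (z 0) * z 2 : ℝ) : ℂ) * d0 z c d
          + ((U z * diracSymbol p₁ p₂ p₃ (κ z) * (U z)ᴴ) c d
            - ((lam (z 0) + mu (z 0) * z 2 : ℝ) : ℂ) * d0 z c d) := by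
      funext z; ring
    rw [heq]
    have hsum := hprod.add hder0
    rw [add_zero] at hsum
    exact hsum
  -- unitarity facts at z₀
  obtain ⟨hUU, hUdet⟩ := hUSU2 z₀
  have hadj : (U z₀)ᴴ = !![U z₀ 1 1, -(U z₀ 0 1); -(U z₀ 1 0), U z₀ 0 0] := by
    have hinv : U z₀ * (U z₀).adjugate = 1 := by
      rw [Matrix.mul_adjugate, hUdet, one_smul]
    calc (U z₀)ᴴ = (U z₀)ᴴ * (U z₀ * (U z₀).adjugate) := by rw [hinv, mul_one]
    _ = ((U z₀)ᴴ * U z₀) * (U z₀).adjugate := by rw [mul_assoc]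
    _ = (U z₀).adjugate := by rw [hUU, one_mul]
    _ = !![U z₀ 1 1, -(U z₀ 0 1); -(U z₀ 1 0), U z₀ 0 0] := Matrix.adjugate_fin_two _
  have hD0 : U z₀ 1 1 = (starRingEnd ℂ) (U z₀ 0 0) := by
    have := congr_fun (congr_fun hadj 0) 0
    simp [Matrix.conjTranspose_apply] at this
    rw [← this]
  have hC0 : U z₀ 1 0 = -((starRingEnd ℂ) (U z₀ 0 1)) := by
    have := congr_fun (congr_fun hadj 0) 1
    simp [Matrix.conjTranspose_apply] at this
    have h' := congr_arg (starRingEnd ℂ) this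
    simpa using h'
  have hnorm : (U z₀ 0 0).re ^ 2 + (U z₀ 0 0).im ^ 2
      + (U z₀ 0 1).re ^ 2 + (U z₀ 0 1).im ^ 2 = 1 := by
    have h := hUdet
    rw [Matrix.det_fin_two, hD0, hC0] at h
    have hre := congr_arg Complex.re h
    simp [Complex.mul_re, Complex.conj_re, Complex.conj_im] at hre
    nlinarith [hre]
  -- the conjugation identity
  have hNdirac : ∀ z, (U z)ᴴ * (U z * diracSymbol p₁ p₂ p₃ (κ z) * (U z)ᴴ) * U z
      = diracSymbol p₁ p₂ p₃ (κ z) := by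
    intro z
    obtain ⟨hUU', _⟩ := hUSU2 z
    have h1' : (U z)ᴴ * (U z * diracSymbol p₁ p₂ p₃ (κ z) * (U z)ᴴ) * U z
        = ((U z)ᴴ * U z) * diracSymbol p₁ p₂ p₃ (κ z) * ((U z)ᴴ * U z) := by
      simp only [← mul_assoc]
    rw [h1', hUU', one_mul, mul_one]
  -- Γ membership
  have hM0 : (U z₀ * diracSymbol p₁ p₂ p₃ (κ z₀) * (U z₀)ᴴ) = 0 := by
    ext c d; exact hMval c d
  have hdval : diracSymbol p₁ p₂ p₃ (κ z₀) = 0 := by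
    have := hNdirac z₀
    rw [hM0] at this
    simpa using this.symm
  have hGam : κ z₀ ∈ Gam p₁ p₂ p₃ := by
    have h00 := congr_fun (congr_fun hdval 0) 0
    have h10 := congr_fun (congr_fun hdval 1) 0
    rw [dirac_00] at h00
    rw [dirac_10] at h10
    simp only [Matrix.zero_apply] at h00 h10
    have hp3 : p₃ (κ z₀) = 0 := by exact_mod_cast h00
    have h10re := congr_arg Complex.re h10
    have h10im := congr_arg Complex.im h10
    simp [Complex.add_re, Complex.add_im, Complex.mul_re, Complex.mul_im] at h10re h10im
    exact ⟨h10re, h10im, hp3⟩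
  -- derivatives of the entries of the conjugated-back matrix
  have hUdiff : ∀ i j, DifferentiableAt ℝ (fun z => U z i j) z₀ := fun i j =>
    ((hUsm i j).differentiable (by simp)).differentiableAt
  have hUcdiff : ∀ i j, DifferentiableAt ℝ (fun z => (starRingEnd ℂ) (U z i j)) z₀ := by
    intro i j
    have := (hUdiff i j).star
    simpa only [Complex.star_def] using this
  have hnab : ∀ a b : Fin 2,
      (fun z => ((U z)ᴴ * (U z * diracSymbol p₁ p₂ p₃ (κ z) * (U z)ᴴ) * U z) a b)
      = fun z => (starRingEnd ℂ) (U z 0 a)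
            * (U z * diracSymbol p₁ p₂ p₃ (κ z) * (U z)ᴴ) 0 0 * U z 0 b
        + (starRingEnd ℂ) (U z 0 a)
            * (U z * diracSymbol p₁ p₂ p₃ (κ z) * (U z)ᴴ) 0 1 * U z 1 b
        + (starRingEnd ℂ) (U z 1 a)
            * (U z * diracSymbol p₁ p₂ p₃ (κ z) * (U z)ᴴ) 1 0 * U z 0 b
        + (starRingEnd ℂ) (U z 1 a)
            * (U z * diracSymbol p₁ p₂ p₃ (κ z) * (U z)ᴴ) 1 1 * U z 1 b := by
    intro a b
    funext z
    simp [Matrix.mul_apply, Fin.sum_univ_two, Matrix.conjTranspose_apply]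
    ring
  have hnder : ∀ a b : Fin 2, HasFDerivAt
      (fun z => ((U z)ᴴ * (U z * diracSymbol p₁ p₂ p₃ (κ z) * (U z)ᴴ) * U z) a b)
      (Dab (U z₀) (lam x₁) a b) z₀ := by
    intro a b
    rw [hnab]
    exact (((hasFDerivAt_umv (hUcdiff 0 a) (hMder 0 0) (hUdiff 0 b) (hMval 0 0)).add
      (hasFDerivAt_umv (hUcdiff 0 a) (hMder 0 1) (hUdiff 1 b) (hMval 0 1))).add
      (hasFDerivAt_umv (hUcdiff 1 a) (hMder 1 0) (hUdiff 0 b) (hMval 1 0))).add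
      (hasFDerivAt_umv (hUcdiff 1 a) (hMder 1 1) (hUdiff 1 b) (hMval 1 1))
  -- the composed symbols as real parts
  have hg1eq : (fun z => p₁ (κ z)) = fun z =>
      (((U z)ᴴ * (U z * diracSymbol p₁ p₂ p₃ (κ z) * (U z)ᴴ) * U z) 1 0).re := by
    funext z; rw [hNdirac z, dirac_10]; simp
  have hg2eq : (fun z => p₂ (κ z)) = fun z =>
      (((U z)ᴴ * (U z * diracSymbol p₁ p₂ p₃ (κ z) * (U z)ᴴ) * U z) 1 0).im := by
    funext z; rw [hNdirac z, dirac_10]; simp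
  have hg3eq : (fun z => p₃ (κ z)) = fun z =>
      (((U z)ᴴ * (U z * diracSymbol p₁ p₂ p₃ (κ z) * (U z)ᴴ) * U z) 0 0).re := by
    funext z; rw [hNdirac z, dirac_00]; simp
  have hgd1 : HasFDerivAt (fun z => p₁ (κ z))
      (Complex.reCLM.comp (Dab (U z₀) (lam x₁) 1 0)) z₀ := by
    rw [hg1eq]
    exact (Complex.reCLM.hasFDerivAt).comp z₀ (hnder 1 0)
  have hgd2 : HasFDerivAt (fun z => p₂ (κ z))
      (Complex.imCLM.comp (Dab (U z₀) (lam x₁) 1 0)) z₀ := by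
    rw [hg2eq]
    exact (Complex.imCLM.hasFDerivAt).comp z₀ (hnder 1 0)
  have hgd3 : HasFDerivAt (fun z => p₃ (κ z))
      (Complex.reCLM.comp (Dab (U z₀) (lam x₁) 0 0)) z₀ := by
    rw [hg3eq]
    exact (Complex.reCLM.hasFDerivAt).comp z₀ (hnder 0 0)
  have hf10 : fderiv ℝ (fun z => p₁ (κ z)) z₀ (Pi.single 0 1) = 0 := by
    rw [hgd1.fderiv, ContinuousLinearMap.comp_apply, Dab_single0]
    simp
  have hf11 : fderiv ℝ (fun z => p₁ (κ z)) z₀ (Pi.single 1 1) = lam x₁ * ((U z₀ 0 1).im^2 - (U z₀ 0 1).re^2 - (U z₀ 0 0).im^2 + (U z₀ 0 0).re^2) := by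
    rw [hgd1.fderiv, ContinuousLinearMap.comp_apply, Dab_single1]
    simp only [hC0, hD0]
    simp only [Complex.reCLM_apply, Complex.imCLM_apply, Complex.add_re, Complex.add_im, Complex.sub_re, Complex.sub_im, Complex.mul_re, Complex.mul_im, Complex.neg_re, Complex.neg_im, Complex.I_re, Complex.I_im, Complex.ofReal_re, Complex.ofReal_im, Complex.conj_re, Complex.conj_im, map_neg]
    ring
  have hf12 : fderiv ℝ (fun z => p₁ (κ z)) z₀ (Pi.single 2 1) = lam x₁ * (2*(U z₀ 0 0).im*(U z₀ 0 1).im + 2*(U z₀ 0 0).re*(U z₀ 0 1).re) := by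
    rw [hgd1.fderiv, ContinuousLinearMap.comp_apply, Dab_single2]
    simp only [hC0, hD0]
    simp only [Complex.reCLM_apply, Complex.imCLM_apply, Complex.add_re, Complex.add_im, Complex.sub_re, Complex.sub_im, Complex.mul_re, Complex.mul_im, Complex.neg_re, Complex.neg_im, Complex.I_re, Complex.I_im, Complex.ofReal_re, Complex.ofReal_im, Complex.conj_re, Complex.conj_im, map_neg]
    ring
  have hf13 : fderiv ℝ (fun z => p₁ (κ z)) z₀ (Pi.single 3 1) = lam x₁ * (2*(U z₀ 0 1).re*(U z₀ 0 1).im - 2*(U z₀ 0 0).re*(U z₀ 0 0).im) := by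
    rw [hgd1.fderiv, ContinuousLinearMap.comp_apply, Dab_single3]
    simp only [hC0, hD0]
    simp only [Complex.reCLM_apply, Complex.imCLM_apply, Complex.add_re, Complex.add_im, Complex.sub_re, Complex.sub_im, Complex.mul_re, Complex.mul_im, Complex.neg_re, Complex.neg_im, Complex.I_re, Complex.I_im, Complex.ofReal_re, Complex.ofReal_im, Complex.conj_re, Complex.conj_im, map_neg]
    ring
  have hf20 : fderiv ℝ (fun z => p₂ (κ z)) z₀ (Pi.single 0 1) = 0 := by
    rw [hgd2.fderiv, ContinuousLinearMap.comp_apply, Dab_single0]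
    simp
  have hf21 : fderiv ℝ (fun z => p₂ (κ z)) z₀ (Pi.single 1 1) = lam x₁ * (2*(U z₀ 0 1).re*(U z₀ 0 1).im + 2*(U z₀ 0 0).re*(U z₀ 0 0).im) := by
    rw [hgd2.fderiv, ContinuousLinearMap.comp_apply, Dab_single1]
    simp only [hC0, hD0]
    simp only [Complex.reCLM_apply, Complex.imCLM_apply, Complex.add_re, Complex.add_im, Complex.sub_re, Complex.sub_im, Complex.mul_re, Complex.mul_im, Complex.neg_re, Complex.neg_im, Complex.I_re, Complex.I_im, Complex.ofReal_re, Complex.ofReal_im, Complex.conj_re, Complex.conj_im, map_neg]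
    ring
  have hf22 : fderiv ℝ (fun z => p₂ (κ z)) z₀ (Pi.single 2 1) = lam x₁ * (2*(U z₀ 0 0).im*(U z₀ 0 1).re - 2*(U z₀ 0 0).re*(U z₀ 0 1).im) := by
    rw [hgd2.fderiv, ContinuousLinearMap.comp_apply, Dab_single2]
    simp only [hC0, hD0]
    simp only [Complex.reCLM_apply, Complex.imCLM_apply, Complex.add_re, Complex.add_im, Complex.sub_re, Complex.sub_im, Complex.mul_re, Complex.mul_im, Complex.neg_re, Complex.neg_im, Complex.I_re, Complex.I_im, Complex.ofReal_re, Complex.ofReal_im, Complex.conj_re, Complex.conj_im, map_neg]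
    ring
  have hf23 : fderiv ℝ (fun z => p₂ (κ z)) z₀ (Pi.single 3 1) = lam x₁ * (-(U z₀ 0 1).im^2 + (U z₀ 0 1).re^2 - (U z₀ 0 0).im^2 + (U z₀ 0 0).re^2) := by
    rw [hgd2.fderiv, ContinuousLinearMap.comp_apply, Dab_single3]
    simp only [hC0, hD0]
    simp only [Complex.reCLM_apply, Complex.imCLM_apply, Complex.add_re, Complex.add_im, Complex.sub_re, Complex.sub_im, Complex.mul_re, Complex.mul_im, Complex.neg_re, Complex.neg_im, Complex.I_re, Complex.I_im, Complex.ofReal_re, Complex.ofReal_im, Complex.conj_re, Complex.conj_im, map_neg]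
    ring
  have hf30 : fderiv ℝ (fun z => p₃ (κ z)) z₀ (Pi.single 0 1) = 0 := by
    rw [hgd3.fderiv, ContinuousLinearMap.comp_apply, Dab_single0]
    simp
  have hf31 : fderiv ℝ (fun z => p₃ (κ z)) z₀ (Pi.single 1 1) = lam x₁ * (2*(U z₀ 0 0).im*(U z₀ 0 1).im - 2*(U z₀ 0 0).re*(U z₀ 0 1).re) := by
    rw [hgd3.fderiv, ContinuousLinearMap.comp_apply, Dab_single1]
    simp only [hC0, hD0]
    simp only [Complex.reCLM_apply, Complex.imCLM_apply, Complex.add_re, Complex.add_im, Complex.sub_re, Complex.sub_im, Complex.mul_re, Complex.mul_im, Complex.neg_re, Complex.neg_im, Complex.I_re, Complex.I_im, Complex.ofReal_re, Complex.ofReal_im, Complex.conj_re, Complex.conj_im, map_neg]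
    ring
  have hf32 : fderiv ℝ (fun z => p₃ (κ z)) z₀ (Pi.single 2 1) = lam x₁ * (-(U z₀ 0 1).im^2 - (U z₀ 0 1).re^2 + (U z₀ 0 0).im^2 + (U z₀ 0 0).re^2) := by
    rw [hgd3.fderiv, ContinuousLinearMap.comp_apply, Dab_single2]
    simp only [hC0, hD0]
    simp only [Complex.reCLM_apply, Complex.imCLM_apply, Complex.add_re, Complex.add_im, Complex.sub_re, Complex.sub_im, Complex.mul_re, Complex.mul_im, Complex.neg_re, Complex.neg_im, Complex.I_re, Complex.I_im, Complex.ofReal_re, Complex.ofReal_im, Complex.conj_re, Complex.conj_im, map_neg]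
    ring
  have hf33 : fderiv ℝ (fun z => p₃ (κ z)) z₀ (Pi.single 3 1) = lam x₁ * (2*(U z₀ 0 0).im*(U z₀ 0 1).re + 2*(U z₀ 0 0).re*(U z₀ 0 1).im) := by
    rw [hgd3.fderiv, ContinuousLinearMap.comp_apply, Dab_single3]
    simp only [hC0, hD0]
    simp only [Complex.reCLM_apply, Complex.imCLM_apply, Complex.add_re, Complex.add_im, Complex.sub_re, Complex.sub_im, Complex.mul_re, Complex.mul_im, Complex.neg_re, Complex.neg_im, Complex.I_re, Complex.I_im, Complex.ofReal_re, Complex.ofReal_im, Complex.conj_re, Complex.conj_im, map_neg]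
    ring
  -- key polynomial identities
  have hK1 : pb (fun z => p₁ (κ z)) (fun z => p₂ (κ z)) z₀ ^ 2
      + pb (fun z => p₂ (κ z)) (fun z => p₃ (κ z)) z₀ ^ 2
      + pb (fun z => p₃ (κ z)) (fun z => p₁ (κ z)) z₀ ^ 2 = lam x₁ ^ 4 := by
    simp only [pb, hf10, hf11, hf12, hf13, hf20, hf21, hf22, hf23, hf30, hf31, hf32, hf33]
    linear_combination (lam x₁ ^ 4 * (((U z₀ 0 0).re ^ 2 + (U z₀ 0 0).im ^ 2 + (U z₀ 0 1).re ^ 2 + (U z₀ 0 1).im ^ 2) + 1) * (((U z₀ 0 0).re ^ 2 + (U z₀ 0 0).im ^ 2 + (U z₀ 0 1).re ^ 2 + (U z₀ 0 1).im ^ 2) ^ 2 + 1)) * hnorm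
  have hT : pb (fun z => p₂ (κ z)) (fun z => p₃ (κ z)) z₀ • hamVF (fun z => p₁ (κ z)) z₀
      + pb (fun z => p₃ (κ z)) (fun z => p₁ (κ z)) z₀ • hamVF (fun z => p₂ (κ z)) z₀
      + pb (fun z => p₁ (κ z)) (fun z => p₂ (κ z)) z₀ • hamVF (fun z => p₃ (κ z)) z₀
      = ![-(lam x₁ ^ 3), 0, 0, 0] := by
    funext i
    fin_cases i
    · simp [Pi.add_apply, Pi.smul_apply, smul_eq_mul, hamVF, pb,
        hf10, hf11, hf12, hf13, hf20, hf21, hf22, hf23, hf30, hf31, hf32, hf33]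
      linear_combination (-(lam x₁ ^ 3) * (((U z₀ 0 0).re ^ 2 + (U z₀ 0 0).im ^ 2 + (U z₀ 0 1).re ^ 2 + (U z₀ 0 1).im ^ 2) ^ 2 + ((U z₀ 0 0).re ^ 2 + (U z₀ 0 0).im ^ 2 + (U z₀ 0 1).re ^ 2 + (U z₀ 0 1).im ^ 2) + 1)) * hnorm
    · simp [Pi.add_apply, Pi.smul_apply, smul_eq_mul, hamVF, pb,
        hf10, hf11, hf12, hf13, hf20, hf21, hf22, hf23, hf30, hf31, hf32, hf33]
      try ring
    · simp [Pi.add_apply, Pi.smul_apply, smul_eq_mul, hamVF, pb,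
        hf10, hf11, hf12, hf13, hf20, hf21, hf22, hf23, hf30, hf31, hf32, hf33]
      try ring
    · simp [Pi.add_apply, Pi.smul_apply, smul_eq_mul, hamVF, pb,
        hf10, hf11, hf12, hf13, hf20, hf21, hf22, hf23, hf30, hf31, hf32, hf33]
      try ring
  have e1 := pb_transfer hκdiff hsymp hp₁ hp₂
  have e2 := pb_transfer hκdiff hsymp hp₂ hp₃
  have e3 := pb_transfer hκdiff hsymp hp₃ hp₁
  have hlamval : lamPartial p₁ p₂ p₃ (κ z₀) = lam x₁ := by
    rw [lamPartial, e1, e2, e3, hK1, ← Real.rpow_natCast (lam x₁) 4,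
      ← Real.rpow_mul (hlampos x₁).le]
    norm_num
  refine ⟨hGam, hlamval, ?_⟩
  have hH1 := hamVF_transfer hκdiff hsymp hp₁
  have hH2 := hamVF_transfer hκdiff hsymp hp₂
  have hH3 := hamVF_transfer hκdiff hsymp hp₃
  rw [Vpartial, hlamval, e1, e2, e3, ← hH1, ← hH2, ← hH3]
  simp only [← _root_.map_smul, ← map_add]
  congr 1
  rw [hT]
  clear hT hK1 hnab hnder hbig hMder hMval hgd1 hgd2 hgd3 hNdirac hdval hM0
    hf10 hf11 hf12 hf13 hf20 hf21 hf22 hf23 hf30 hf31 hf32 hf33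
    hg1eq hg2eq hg3eq e1 e2 e3 hH1 hH2 hH3 hadj hUU hnorm hsymp hnfV
  have hl : lam x₁ ≠ 0 := (hlampos x₁).ne'
  funext i
  fin_cases i <;> simp
  field_simp
/-- Lemma B.8: `λ_∂` and `V_∂` along `Γ` from the normal form. -/
theorem lambda_and_V_from_normal_form
    (p₁ p₂ p₃ : (Fin 4 → ℝ) → ℝ)
    (hp₁ : ContDiff ℝ (⊤ : ℕ∞) p₁) (hp₂ : ContDiff ℝ (⊤ : ℕ∞) p₂)
    (hp₃ : ContDiff ℝ (⊤ : ℕ∞) p₃)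
    (hA1 : A1 p₁ p₂ p₃) (hA2 : A2 p₁ p₂ p₃)
    (W : Set (Fin 4 → ℝ)) (hW : IsOpen W) (h0W : (0 : Fin 4 → ℝ) ∈ W)
    (κ : (Fin 4 → ℝ) → (Fin 4 → ℝ))
    (hκsm : ContDiffOn ℝ (⊤ : ℕ∞) κ W) (hκinj : Set.InjOn κ W)
    (hκopen : IsOpen (κ '' W))
    (hκsymp : ∀ z ∈ W, ∀ u v : Fin 4 → ℝ,
      omega4 (fderiv ℝ κ z u) (fderiv ℝ κ z v) = omega4 u v)
    (hκ0 : κ 0 ∈ Gam p₁ p₂ p₃)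
    (lam mu : ℝ → ℝ) (hlam : ContDiff ℝ (⊤ : ℕ∞) lam) (hlampos : ∀ x, 0 < lam x)
    (hmu : ContDiff ℝ (⊤ : ℕ∞) mu)
    (U : (Fin 4 → ℝ) → Matrix (Fin 2) (Fin 2) ℂ)
    (hUsm : ∀ i j, ContDiff ℝ (⊤ : ℕ∞) (fun z => U z i j))
    (hUSU2 : ∀ z, MemSU2 (U z))
    (hnf : ∃ V : Set (Fin 4 → ℝ), IsOpen V ∧ (0 : Fin 4 → ℝ) ∈ V ∧
      ∀ i j : Fin 2, IsBigOC 3 V (fun z =>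
        (U z * diracSymbol p₁ p₂ p₃ (κ z) * (U z)ᴴ) i j -
          ((lam (z 0) + mu (z 0) * z 2 : ℝ) : ℂ) * d0 z i j)) :
    ∃ δ > (0 : ℝ), ∀ x₁ : ℝ, |x₁| < δ →
      (![x₁, 0, 0, 0] : Fin 4 → ℝ) ∈ W ∧
      κ ![x₁, 0, 0, 0] ∈ Gam p₁ p₂ p₃ ∧
      lamPartial p₁ p₂ p₃ (κ ![x₁, 0, 0, 0]) = lam x₁ ∧
      Vpartial p₁ p₂ p₃ (κ ![x₁, 0, 0, 0]) =
        fderiv ℝ κ ![x₁, 0, 0, 0] ![lam x₁, 0, 0, 0] := by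
  obtain ⟨V, hVopen, h0V, hnfV⟩ := hnf
  have hcont : Continuous (fun x : ℝ => (![x, 0, 0, 0] : Fin 4 → ℝ)) := by
    refine continuous_pi fun i => ?_
    fin_cases i <;> simp <;> continuity
  have hOopen : IsOpen ((fun x : ℝ => (![x, 0, 0, 0] : Fin 4 → ℝ)) ⁻¹' (W ∩ V)) :=
    (hW.inter hVopen).preimage hcont
  have h0eq : (![0, 0, 0, 0] : Fin 4 → ℝ) = 0 := by
    funext i; fin_cases i <;> rfl
  have h0O : (0 : ℝ) ∈ (fun x : ℝ => (![x, 0, 0, 0] : Fin 4 → ℝ)) ⁻¹' (W ∩ V) := by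
    simp only [Set.mem_preimage, h0eq]
    exact ⟨h0W, h0V⟩
  obtain ⟨δ, hδpos, hball⟩ := Metric.isOpen_iff.mp hOopen 0 h0O
  refine ⟨δ, hδpos, fun x₁ hx₁ => ?_⟩
  have hmem : (![x₁, 0, 0, 0] : Fin 4 → ℝ) ∈ W ∩ V := by
    apply hball
    simp [Real.dist_eq, hx₁]
  have hκdiff : DifferentiableAt ℝ κ ![x₁, 0, 0, 0] :=
    ((hκsm.contDiffAt (hW.mem_nhds hmem.1)).differentiableAt (by simp))
  obtain ⟨hGam, hlamv, hVv⟩ := core p₁ p₂ p₃ hp₁ hp₂ hp₃ κ lam mu hlam hlampos hmu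
    U hUsm hUSU2 V hVopen hnfV x₁ ![x₁, 0, 0, 0] (by simp) (by simp) (by simp) (by simp)
    hmem.2 hκdiff (hκsymp _ hmem.1)
  exact ⟨hmem.1, hGam, hlamv, hVv⟩

end
end

section
/- Let λ ∈ C_b^∞(ℝ,ℝ) and let F̃, G̃ : ℝ × ℝ² → ℝ be smooth functions satisfying ∂_tF̃ = λ(F̃)·sin(G̃), ∂_tG̃ = −λ′(F̃)·cos(G̃), F̃(0,x,ζ) = x, G̃(0,x,ζ) = ζ (the flow of the ODE ẋ = λ(x)sin ζ, ζ̇ = −λ′(x)cos ζ). Then: (a) for every (t,ζ) ∈ ℝ², the map x ↦ F̃(t,x,ζ) is surjective onto ℝ; (b) there exists T ∈ (0,1) such that |∂_xF̃(t,x,ζ)| ≥ 1/2 for all t ∈ (0,T) and all (x,ζ) ∈ ℝ². -/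
noncomputable section

/-- `C_b^∞`: smooth with all derivatives (of every order) bounded. -/
def CbInfty (f : ℝ → ℝ) : Prop :=
  ContDiff ℝ (⊤ : ℕ∞) f ∧ ∀ k : ℕ, ∃ C : ℝ, ∀ x : ℝ, |iteratedDeriv k f x| ≤ C

open Set Real
open scoped NNReal

private lemma abs_mul_sub_mul (a b c d : ℝ) : |a * b - c * d| ≤ |a - c| * |b| + |c| * |b - d| := by
  have h : a * b - c * d = (a - c) * b + c * (b - d) := by ring
  rw [h]
  exact (abs_add_le _ _).trans (by rw [abs_mul, abs_mul])

private lemma lip_of_deriv_bound {f : ℝ → ℝ} (hf : Differentiable ℝ f) {C : ℝ}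
    (h : ∀ x, |deriv f x| ≤ C) (a b : ℝ) : |f a - f b| ≤ C * |a - b| := by
  have := Convex.norm_image_sub_le_of_norm_deriv_le (s := (univ : Set ℝ)) (f := f)
    (fun x _ => hf x) (fun x _ => by simpa [Real.norm_eq_abs] using h x)
    convex_univ (mem_univ b) (mem_univ a)
  simpa [Real.norm_eq_abs] using this

private lemma abs_sin_sub_sin (a b : ℝ) : |Real.sin a - Real.sin b| ≤ |a - b| := by
  have := lip_of_deriv_bound Real.differentiable_sin (C := 1)
    (fun x => by rw [Real.deriv_sin]; exact Real.abs_cos_le_one x) a b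
  simpa using this

private lemma abs_cos_sub_cos (a b : ℝ) : |Real.cos a - Real.cos b| ≤ |a - b| := by
  have := lip_of_deriv_bound Real.differentiable_cos (C := 1)
    (fun x => by rw [Real.deriv_cos']; simpa using Real.abs_sin_le_one x) a b
  simpa using this

/-- Lemma C.7: surjectivity and short-time reversibility of the
compactified classical flow. -/
theorem flow_surjective_and_x_derivative_bounded_below
    (lam : ℝ → ℝ) (hlam : CbInfty lam)
    (F G : ℝ × ℝ × ℝ → ℝ)
    (hF : ContDiff ℝ (⊤ : ℕ∞) F) (hG : ContDiff ℝ (⊤ : ℕ∞) G)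
    (hFode : ∀ t x ζ : ℝ, deriv (fun s => F (s, x, ζ)) t =
      lam (F (t, x, ζ)) * Real.sin (G (t, x, ζ)))
    (hGode : ∀ t x ζ : ℝ, deriv (fun s => G (s, x, ζ)) t =
      -(deriv lam (F (t, x, ζ))) * Real.cos (G (t, x, ζ)))
    (hF0 : ∀ x ζ : ℝ, F (0, x, ζ) = x)
    (hG0 : ∀ x ζ : ℝ, G (0, x, ζ) = ζ) :
    (∀ t ζ : ℝ, Function.Surjective (fun x => F (t, x, ζ))) ∧
    (∃ T : ℝ, T ∈ Set.Ioo (0 : ℝ) 1 ∧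
      ∀ t ∈ Set.Ioo (0 : ℝ) T, ∀ x ζ : ℝ,
        (1 : ℝ) / 2 ≤ |deriv (fun y => F (t, y, ζ)) x|) := by
  obtain ⟨hsm, hbd⟩ := hlam
  obtain ⟨C0, hC0⟩ := hbd 0
  obtain ⟨C1, hC1⟩ := hbd 1
  obtain ⟨C2, hC2⟩ := hbd 2
  simp only [iteratedDeriv_zero] at hC0
  simp only [iteratedDeriv_one] at hC1
  have h2 : iteratedDeriv 2 lam = deriv (deriv lam) := by
    rw [show (2 : ℕ) = 1 + 1 from rfl, iteratedDeriv_succ, iteratedDeriv_one]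
  rw [h2] at hC2
  have hC0n : 0 ≤ C0 := le_trans (abs_nonneg _) (hC0 0)
  have hC1n : 0 ≤ C1 := le_trans (abs_nonneg _) (hC1 0)
  have hC2n : 0 ≤ C2 := le_trans (abs_nonneg _) (hC2 0)
  have hlamd : Differentiable ℝ lam := hsm.differentiable (by simp)
  have hdlamd : Differentiable ℝ (deriv lam) := by
    have := ContDiff.iterate_deriv 1 hsm
    simpa using this.differentiable (by simp)
  have hlip1 : ∀ a b : ℝ, |lam a - lam b| ≤ C1 * |a - b| :=
    lip_of_deriv_bound hlamd hC1
  have hlip2 : ∀ a b : ℝ, |deriv lam a - deriv lam b| ≤ C2 * |a - b| :=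
    lip_of_deriv_bound hdlamd hC2
  -- differentiability of slices
  have hFdiff : ∀ x ζ : ℝ, Differentiable ℝ (fun s => F (s, x, ζ)) := fun x ζ =>
    (hF.differentiable (by simp)).comp (differentiable_id.prodMk (differentiable_const (x, ζ)))
  have hGdiff : ∀ x ζ : ℝ, Differentiable ℝ (fun s => G (s, x, ζ)) := fun x ζ =>
    (hG.differentiable (by simp)).comp (differentiable_id.prodMk (differentiable_const (x, ζ)))
  have hFt : ∀ t x ζ : ℝ, HasDerivAt (fun s => F (s, x, ζ))
      (lam (F (t, x, ζ)) * Real.sin (G (t, x, ζ))) t := by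
    intro t x ζ
    have h := ((hFdiff x ζ) t).hasDerivAt
    rwa [hFode] at h
  have hGt : ∀ t x ζ : ℝ, HasDerivAt (fun s => G (s, x, ζ))
      (-(deriv lam (F (t, x, ζ))) * Real.cos (G (t, x, ζ))) t := by
    intro t x ζ
    have h := ((hGdiff x ζ) t).hasDerivAt
    rwa [hGode] at h
  -- Part (a): surjectivity
  have hbound : ∀ t x ζ : ℝ, |F (t, x, ζ) - x| ≤ C0 * |t| := by
    intro t x ζ
    have := Convex.norm_image_sub_le_of_norm_deriv_le (s := (univ : Set ℝ))
      (f := fun s => F (s, x, ζ)) (fun s _ => (hFdiff x ζ) s)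
      (fun s _ => by
        rw [hFode, Real.norm_eq_abs, abs_mul]
        calc |lam (F (s, x, ζ))| * |Real.sin (G (s, x, ζ))| ≤ C0 * 1 :=
              mul_le_mul (hC0 _) (Real.abs_sin_le_one _) (abs_nonneg _) hC0n
          _ = C0 := mul_one _)
      convex_univ (mem_univ 0) (mem_univ t)
    simpa [Real.norm_eq_abs, hF0] using this
  have surj : ∀ t ζ : ℝ, Function.Surjective (fun x => F (t, x, ζ)) := by
    intro t ζ z
    have hcont : Continuous (fun x => F (t, x, ζ)) :=
      (hF.continuous).comp (continuous_const.prodMk (continuous_id.prodMk continuous_const))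
    set a := z - C0 * |t| with ha
    set b := z + C0 * |t| with hb
    have hab : a ≤ b := by
      have : 0 ≤ C0 * |t| := mul_nonneg hC0n (abs_nonneg _)
      simp only [ha, hb]; linarith
    have hfa : F (t, a, ζ) ≤ z := by
      have := hbound t a ζ
      have h1 := (abs_le.mp this).2
      simp only [ha] at h1 ⊢; linarith
    have hfb : z ≤ F (t, b, ζ) := by
      have := hbound t b ζ
      have h1 := (abs_le.mp this).1
      simp only [hb] at h1 ⊢; linarith
    have := intermediate_value_Icc hab hcont.continuousOn
    obtain ⟨x, _, hx⟩ := this ⟨hfa, hfb⟩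
    exact ⟨x, hx⟩
  refine ⟨surj, ?_⟩
  -- Part (b)
  set Kr : ℝ := max (C1 + C0) (C2 + C1) with hKrdef
  have hKr0 : 0 ≤ Kr := le_trans (by linarith) (le_max_left _ _)
  set K : ℝ≥0 := Real.toNNReal Kr with hKdef
  have hKco : (K : ℝ) = Kr := Real.coe_toNNReal _ hKr0
  set v : ℝ × ℝ → ℝ × ℝ :=
    fun p => (lam p.1 * Real.sin p.2, -(deriv lam p.1) * Real.cos p.2) with hvdef
  have hvlip : LipschitzWith K v := by
    apply LipschitzWith.of_dist_le_mul
    intro p q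
    have hd1 : |p.1 - q.1| ≤ dist p q := by
      rw [Prod.dist_eq, ← Real.dist_eq]; exact le_max_left _ _
    have hd2 : |p.2 - q.2| ≤ dist p q := by
      rw [Prod.dist_eq, ← Real.dist_eq]; exact le_max_right _ _
    have hdn : (0 : ℝ) ≤ dist p q := dist_nonneg
    rw [hKco, Prod.dist_eq]
    apply max_le
    · rw [Real.dist_eq]
      calc |lam p.1 * Real.sin p.2 - lam q.1 * Real.sin q.2|
          ≤ |lam p.1 - lam q.1| * |Real.sin p.2| + |lam q.1| * |Real.sin p.2 - Real.sin q.2| :=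
            abs_mul_sub_mul _ _ _ _
        _ ≤ (C1 * |p.1 - q.1|) * 1 + C0 * |p.2 - q.2| :=
            add_le_add
              (mul_le_mul (hlip1 _ _) (Real.abs_sin_le_one _) (abs_nonneg _)
                (mul_nonneg hC1n (abs_nonneg _)))
              (mul_le_mul (hC0 _) (abs_sin_sub_sin _ _) (abs_nonneg _) hC0n)
        _ = C1 * |p.1 - q.1| + C0 * |p.2 - q.2| := by ring
        _ ≤ C1 * dist p q + C0 * dist p q :=
            add_le_add (mul_le_mul_of_nonneg_left hd1 hC1n)
              (mul_le_mul_of_nonneg_left hd2 hC0n)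
        _ = (C1 + C0) * dist p q := by ring
        _ ≤ Kr * dist p q := mul_le_mul_of_nonneg_right (le_max_left _ _) hdn
    · rw [Real.dist_eq]
      calc |(-(deriv lam p.1)) * Real.cos p.2 - (-(deriv lam q.1)) * Real.cos q.2|
          ≤ |(-(deriv lam p.1)) - (-(deriv lam q.1))| * |Real.cos p.2|
              + |(-(deriv lam q.1))| * |Real.cos p.2 - Real.cos q.2| :=
            abs_mul_sub_mul _ _ _ _
        _ ≤ (C2 * |p.1 - q.1|) * 1 + C1 * |p.2 - q.2| := by
            have e1 : |(-(deriv lam p.1)) - (-(deriv lam q.1))| ≤ C2 * |p.1 - q.1| := by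
              rw [show -(deriv lam p.1) - -(deriv lam q.1)
                = -(deriv lam p.1 - deriv lam q.1) by ring, abs_neg]
              exact hlip2 _ _
            have e2 : |(-(deriv lam q.1))| ≤ C1 := by rw [abs_neg]; exact hC1 _
            exact add_le_add
              (mul_le_mul e1 (Real.abs_cos_le_one _) (abs_nonneg _)
                (mul_nonneg hC2n (abs_nonneg _)))
              (mul_le_mul e2 (abs_cos_sub_cos _ _) (abs_nonneg _) hC1n)
        _ = C2 * |p.1 - q.1| + C1 * |p.2 - q.2| := by ring
        _ ≤ C2 * dist p q + C1 * dist p q :=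
            add_le_add (mul_le_mul_of_nonneg_left hd1 hC2n)
              (mul_le_mul_of_nonneg_left hd2 hC1n)
        _ = (C2 + C1) * dist p q := by ring
        _ ≤ Kr * dist p q := mul_le_mul_of_nonneg_right (le_max_right _ _) hdn
  -- key Gronwall estimate
  have key : ∀ t ∈ Set.Ioc (0:ℝ) 1, ∀ x y ζ : ℝ,
      |F (t, x, ζ) - F (t, y, ζ) - (x - y)| ≤ (Kr * Real.exp Kr * |x - y|) * t := by
    intro t ht x y ζ
    set f : ℝ → ℝ × ℝ := fun s => (F (s, x, ζ), G (s, x, ζ)) with hfdef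
    set g : ℝ → ℝ × ℝ := fun s => (F (s, y, ζ), G (s, y, ζ)) with hgdef
    have hfd : ∀ s : ℝ, HasDerivAt f (v (f s)) s := fun s => (hFt s x ζ).prodMk (hGt s x ζ)
    have hgd : ∀ s : ℝ, HasDerivAt g (v (g s)) s := fun s => (hFt s y ζ).prodMk (hGt s y ζ)
    have hdist0 : dist (f 0) (g 0) = |x - y| := by
      simp only [hfdef, hgdef, hF0, hG0, Prod.dist_eq, Real.dist_eq, sub_self, abs_zero]
      exact max_eq_left (abs_nonneg _)
    have hgron := dist_le_of_trajectories_ODE (v := fun _ : ℝ => v) (K := K)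
      (fun _ => hvlip)
      (fun s _ => ((hfd s).continuousAt.continuousWithinAt))
      (fun s _ => (hfd s).hasDerivWithinAt)
      (fun s _ => ((hgd s).continuousAt.continuousWithinAt))
      (fun s _ => (hgd s).hasDerivWithinAt)
      (le_of_eq hdist0) (a := 0) (b := t)
    -- bound on distance for s in [0,t]
    have hdb : ∀ s ∈ Icc (0:ℝ) t, dist (f s) (g s) ≤ |x - y| * Real.exp Kr := by
      intro s hs
      have h1 := hgron s hs
      have h2 : Real.exp ((K : ℝ) * (s - 0)) ≤ Real.exp Kr := by
        apply Real.exp_le_exp.mpr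
        rw [hKco, sub_zero]
        calc Kr * s ≤ Kr * 1 := by
              have hs1 : s ≤ 1 := le_trans hs.2 ht.2
              exact mul_le_mul_of_nonneg_left hs1 hKr0
          _ = Kr := mul_one _
      calc dist (f s) (g s) ≤ |x - y| * Real.exp ((K : ℝ) * (s - 0)) := h1
        _ ≤ |x - y| * Real.exp Kr := mul_le_mul_of_nonneg_left h2 (abs_nonneg _)
    -- now bound on D s = F(s,x,ζ) - F(s,y,ζ)
    set D : ℝ → ℝ := fun s => F (s, x, ζ) - F (s, y, ζ) with hDdef
    have hD : ∀ s ∈ Icc (0:ℝ) t, HasDerivWithinAt D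
        (lam (F (s, x, ζ)) * Real.sin (G (s, x, ζ))
          - lam (F (s, y, ζ)) * Real.sin (G (s, y, ζ))) (Icc 0 t) s :=
      fun s _ => ((hFt s x ζ).sub (hFt s y ζ)).hasDerivWithinAt
    have hbnd : ∀ s ∈ Ico (0:ℝ) t,
        ‖lam (F (s, x, ζ)) * Real.sin (G (s, x, ζ))
          - lam (F (s, y, ζ)) * Real.sin (G (s, y, ζ))‖ ≤ Kr * Real.exp Kr * |x - y| := by
      intro s hs
      have hFc : |F (s, x, ζ) - F (s, y, ζ)| ≤ dist (f s) (g s) := by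
        rw [Prod.dist_eq, ← Real.dist_eq]; exact le_max_left _ _
      have hGc : |G (s, x, ζ) - G (s, y, ζ)| ≤ dist (f s) (g s) := by
        rw [Prod.dist_eq, ← Real.dist_eq]; exact le_max_right _ _
      have hds := hdb s ⟨hs.1, le_of_lt hs.2⟩
      rw [Real.norm_eq_abs]
      calc |lam (F (s, x, ζ)) * Real.sin (G (s, x, ζ))
            - lam (F (s, y, ζ)) * Real.sin (G (s, y, ζ))|
          ≤ |lam (F (s, x, ζ)) - lam (F (s, y, ζ))| * |Real.sin (G (s, x, ζ))|
            + |lam (F (s, y, ζ))| * |Real.sin (G (s, x, ζ)) - Real.sin (G (s, y, ζ))| :=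
            abs_mul_sub_mul _ _ _ _
        _ ≤ (C1 * |F (s, x, ζ) - F (s, y, ζ)|) * 1
            + C0 * |G (s, x, ζ) - G (s, y, ζ)| :=
            add_le_add
              (mul_le_mul (hlip1 _ _) (Real.abs_sin_le_one _) (abs_nonneg _)
                (mul_nonneg hC1n (abs_nonneg _)))
              (mul_le_mul (hC0 _) (abs_sin_sub_sin _ _) (abs_nonneg _) hC0n)
        _ = C1 * |F (s, x, ζ) - F (s, y, ζ)| + C0 * |G (s, x, ζ) - G (s, y, ζ)| := by ring
        _ ≤ C1 * dist (f s) (g s) + C0 * dist (f s) (g s) :=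
            add_le_add (mul_le_mul_of_nonneg_left hFc hC1n)
              (mul_le_mul_of_nonneg_left hGc hC0n)
        _ = (C1 + C0) * dist (f s) (g s) := by ring
        _ ≤ Kr * (|x - y| * Real.exp Kr) := by
            apply mul_le_mul (le_max_left _ _) hds dist_nonneg hKr0
        _ = Kr * Real.exp Kr * |x - y| := by ring
    have := norm_image_sub_le_of_norm_deriv_le_segment' hD hbnd t ⟨le_of_lt ht.1, le_refl t⟩
    have hD0 : D 0 = x - y := by simp [hDdef, hF0]
    rw [hD0] at this
    simpa [Real.norm_eq_abs, hDdef] using this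
  -- choose T
  set B : ℝ := Kr * Real.exp Kr with hBdef
  have hB0 : 0 ≤ B := mul_nonneg hKr0 (Real.exp_pos _).le
  refine ⟨min (1/2) (1/(2*(B+1))), ⟨?_, ?_⟩, ?_⟩
  · apply lt_min (by norm_num)
    positivity
  · exact lt_of_le_of_lt (min_le_left _ _) (by norm_num)
  · intro t ht x ζ
    have htpos : 0 < t := ht.1
    have ht2 : t < 1/2 := lt_of_lt_of_le ht.2 (min_le_left _ _)
    have ht3 : t < 1/(2*(B+1)) := lt_of_lt_of_le ht.2 (min_le_right _ _)
    have htIoc : t ∈ Set.Ioc (0:ℝ) 1 := ⟨htpos, by linarith⟩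
    -- separation estimate
    have hsep : ∀ y z : ℝ, |y - z| / 2 ≤ |F (t, y, ζ) - F (t, z, ζ)| := by
      intro y z
      have hk := key t htIoc y z ζ
      have hBt : B * t ≤ 1/2 := by
        have h1 : (B + 1) * t ≤ (B + 1) * (1/(2*(B+1))) := by
          apply mul_le_mul_of_nonneg_left (le_of_lt ht3) (by linarith)
        have h2 : (B + 1) * (1/(2*(B+1))) = 1/2 := by
          field_simp
        nlinarith
      have h3 : |F (t, y, ζ) - F (t, z, ζ) - (y - z)| ≤ (1/2) * |y - z| := by
        calc |F (t, y, ζ) - F (t, z, ζ) - (y - z)| ≤ (B * |y - z|) * t := hk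
          _ = (B * t) * |y - z| := by ring
          _ ≤ (1/2) * |y - z| := mul_le_mul_of_nonneg_right hBt (abs_nonneg _)
      have h4 : |y - z| - |F (t, y, ζ) - F (t, z, ζ)| ≤ |F (t, y, ζ) - F (t, z, ζ) - (y - z)| := by
        have := abs_sub_abs_le_abs_sub (y - z) (F (t, y, ζ) - F (t, z, ζ))
        have heq : |(y - z) - (F (t, y, ζ) - F (t, z, ζ))|
            = |F (t, y, ζ) - F (t, z, ζ) - (y - z)| := abs_sub_comm _ _
        linarith [abs_sub_abs_le_abs_sub (y - z) (F (t, y, ζ) - F (t, z, ζ)), heq ▸ this]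
      linarith
    -- derivative bound via slope
    have hφd : DifferentiableAt ℝ (fun y => F (t, y, ζ)) x :=
      ((hF.differentiable (by simp)).comp
        ((differentiable_const t).prodMk (differentiable_id.prodMk (differentiable_const ζ)))) x
    have hder := hφd.hasDerivAt
    have htend := hasDerivAt_iff_tendsto_slope.mp hder
    have habs : Filter.Tendsto (fun y => |slope (fun y => F (t, y, ζ)) x y|)
        (nhdsWithin x {x}ᶜ) (nhds |deriv (fun y => F (t, y, ζ)) x|) := htend.abs
    apply ge_of_tendsto habs
    filter_upwards [self_mem_nhdsWithin] with y hy
    have hyx : y ≠ x := hy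
    have hne : y - x ≠ 0 := sub_ne_zero.mpr hyx
    rw [slope_def_field, abs_div]
    rw [le_div_iff₀ (abs_pos.mpr hne)]
    have := hsep y x
    calc (1:ℝ)/2 * |y - x| = |y - x| / 2 := by ring
      _ ≤ |F (t, y, ζ) - F (t, x, ζ)| := this

end
end
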